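/- Let n, m ≥ 2, x̄, ȳ ∈ ℝ, sX², sY² > 0, and μ ∈ ℝ a root of the Behrens-Fisher cubic with r = n/m. Define σX² = (x̄−μ)² + sX² and σY² = (ȳ−μ)² + sY². Then (μ, σX², σY²) is a critical point of the log-likelihood ℓ(μ, σX², σY²) = −((n+m)/2)log(2π) − (n/2)log σX² − (m/2)log σY² − (n/2)(sX² + (x̄−μ)²)/σX² − (m/2)(sY² + (ȳ−μ)²)/σY², i.e., all three partial derivatives of ℓ vanish at this point. -/

import Mathlib

noncomputable def ell (n m : ℕ) (xbar ybar sX2 sY2 : ℝ) (μ σX2 σY2 : ℝ) : ℝ :=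
  -((n + m : ℝ)/2) * Real.log (2*Real.pi)
  - ((n : ℝ)/2) * Real.log σX2 - ((m : ℝ)/2) * Real.log σY2
  - ((n : ℝ)/2) * ((sX2 + (xbar - μ)^2) / σX2)
  - ((m : ℝ)/2) * ((sY2 + (ybar - μ)^2) / σY2)

theorem cubic_root_gives_critical_point
    (n m : ℕ) (hn : 2 ≤ n) (hm : 2 ≤ m)
    (xbar ybar sX2 sY2 : ℝ) (hsX : 0 < sX2) (hsY : 0 < sY2)
    (r : ℝ) (hr : r = (n : ℝ) / m)
    (μ : ℝ)
    (hroot : (1 + r)*μ^3 - ((2*xbar + ybar) + r*(2*ybar + xbar))*μ^2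
      + (xbar^2 + 2*(1+r)*xbar*ybar + r*ybar^2 + sX2 + r*sY2)*μ
      - (xbar^2*ybar + r*ybar^2*xbar + sX2*ybar + r*sY2*xbar) = 0)
    (σX2 σY2 : ℝ)
    (hσX : σX2 = (xbar - μ)^2 + sX2) (hσY : σY2 = (ybar - μ)^2 + sY2) :
    deriv (fun t => ell n m xbar ybar sX2 sY2 t σX2 σY2) μ = 0 ∧
    deriv (fun t => ell n m xbar ybar sX2 sY2 μ t σY2) σX2 = 0 ∧
    deriv (fun t => ell n m xbar ybar sX2 sY2 μ σX2 t) σY2 = 0 := by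
  have hm0 : (0:ℝ) < (m:ℝ) := by positivity
  have hσX0 : 0 < σX2 := by rw [hσX]; positivity
  have hσY0 : 0 < σY2 := by rw [hσY]; positivity
  refine ⟨?_, ?_, ?_⟩
  · -- derivative in μ
    have hx : HasDerivAt (fun t : ℝ => sX2 + (xbar - t)^2) (0 + 2*(xbar - μ)*(0-1)) μ := by
      have := (hasDerivAt_const μ sX2).add
        (((hasDerivAt_const μ xbar).sub (hasDerivAt_id' (x := μ))).pow 2)
      exact this.congr_deriv (by norm_num)
    have hy : HasDerivAt (fun t : ℝ => sY2 + (ybar - t)^2) (0 + 2*(ybar - μ)*(0-1)) μ := by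
      have := (hasDerivAt_const μ sY2).add
        (((hasDerivAt_const μ ybar).sub (hasDerivAt_id' (x := μ))).pow 2)
      exact this.congr_deriv (by norm_num)
    have h : HasDerivAt (fun t => ell n m xbar ybar sX2 sY2 t σX2 σY2)
        (0 - ((n : ℝ)/2) * ((0 + 2*(xbar - μ)*(0-1)) / σX2)
           - ((m : ℝ)/2) * ((0 + 2*(ybar - μ)*(0-1)) / σY2)) μ := by
      unfold ell
      exact ((hasDerivAt_const μ
          (-((n + m : ℝ)/2) * Real.log (2*Real.pi)
            - ((n : ℝ)/2) * Real.log σX2 - ((m : ℝ)/2) * Real.log σY2)).sub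
          ((hx.div_const σX2).const_mul ((n:ℝ)/2))).sub
          ((hy.div_const σY2).const_mul ((m:ℝ)/2))
    rw [h.deriv]
    have hn0 : (n:ℝ) = r * m := by rw [hr]; field_simp
    have key : r * (xbar - μ) * σY2 + (ybar - μ) * σX2 = 0 := by
      rw [hσX, hσY]; linear_combination -hroot
    have key2 : (n:ℝ)*(xbar-μ)*σY2 + (m:ℝ)*(ybar-μ)*σX2 = 0 := by
      linear_combination (m:ℝ)*key + (xbar-μ)*σY2*hn0
    field_simp
    linear_combination 2*key2
  · -- derivative in σX2
    have hinv : HasDerivAt (fun t : ℝ => (sX2 + (xbar - μ)^2) / t)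
        (-(sX2 + (xbar - μ)^2) / σX2^2) σX2 := by
      have := (hasDerivAt_inv (ne_of_gt hσX0)).const_mul (sX2 + (xbar - μ)^2)
      have heq : (fun t : ℝ => (sX2 + (xbar - μ)^2) / t)
          = fun t : ℝ => (sX2 + (xbar - μ)^2) * t⁻¹ := by
        funext t; rw [div_eq_mul_inv]
      rw [heq]
      exact this.congr_deriv (by ring)
    have h : HasDerivAt (fun t => ell n m xbar ybar sX2 sY2 μ t σY2)
        (0 - ((n : ℝ)/2) * (1/σX2) - 0
           - ((n : ℝ)/2) * (-(sX2 + (xbar - μ)^2) / σX2^2) - 0) σX2 := by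
      unfold ell
      have hlog : HasDerivAt (fun t : ℝ => ((n : ℝ)/2) * Real.log t) (((n:ℝ)/2) * (1/σX2)) σX2 := by
        have := (Real.hasDerivAt_log (ne_of_gt hσX0)).const_mul ((n:ℝ)/2)
        exact this.congr_deriv (by ring)
      exact (((((hasDerivAt_const σX2
          (-((n + m : ℝ)/2) * Real.log (2*Real.pi))).sub hlog).sub
          (hasDerivAt_const σX2 (((m : ℝ)/2) * Real.log σY2))).sub
          (hinv.const_mul ((n:ℝ)/2))).sub
          (hasDerivAt_const σX2 (((m : ℝ)/2) * ((sY2 + (ybar - μ)^2) / σY2))))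
    rw [h.deriv, hσX]
    have h0 : (xbar - μ)^2 + sX2 ≠ 0 := by positivity
    field_simp
    ring
  · -- derivative in σY2
    have hinv : HasDerivAt (fun t : ℝ => (sY2 + (ybar - μ)^2) / t)
        (-(sY2 + (ybar - μ)^2) / σY2^2) σY2 := by
      have := (hasDerivAt_inv (ne_of_gt hσY0)).const_mul (sY2 + (ybar - μ)^2)
      have heq : (fun t : ℝ => (sY2 + (ybar - μ)^2) / t)
          = fun t : ℝ => (sY2 + (ybar - μ)^2) * t⁻¹ := by
        funext t; rw [div_eq_mul_inv]
      rw [heq]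
      exact this.congr_deriv (by ring)
    have h : HasDerivAt (fun t => ell n m xbar ybar sX2 sY2 μ σX2 t)
        (0 - 0 - ((m : ℝ)/2) * (1/σY2) - 0
           - ((m : ℝ)/2) * (-(sY2 + (ybar - μ)^2) / σY2^2)) σY2 := by
      unfold ell
      have hlog : HasDerivAt (fun t : ℝ => ((m : ℝ)/2) * Real.log t) (((m:ℝ)/2) * (1/σY2)) σY2 := by
        have := (Real.hasDerivAt_log (ne_of_gt hσY0)).const_mul ((m:ℝ)/2)
        exact this.congr_deriv (by ring)
      exact (((((hasDerivAt_const σY2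
          (-((n + m : ℝ)/2) * Real.log (2*Real.pi))).sub
          (hasDerivAt_const σY2 (((n : ℝ)/2) * Real.log σX2))).sub hlog).sub
          (hasDerivAt_const σY2 (((n : ℝ)/2) * ((sX2 + (xbar - μ)^2) / σX2)))).sub
          (hinv.const_mul ((m:ℝ)/2)))
    rw [h.deriv, hσY]
    have h0 : (ybar - μ)^2 + sY2 ≠ 0 := by positivity
    field_simp
    ring
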